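/- The degree-two swap of equation (iv) preserves transition counts: for T ≥ 4, let ω_1 be a path over {1,2} with (ω_1)_{t_0} = (ω_1)_{t_0+1} = 1, (ω_1)_{t_0+2} = 2, and ω_2 a path with (ω_2)_{t_1} = 1, (ω_2)_{t_1+1} = (ω_2)_{t_1+2} = 2 (1 ≤ t_0, t_1 ≤ T−2). Define ω̃_1 by replacing positions t_0, t_0+1, t_0+2 of ω_1 with 1,2,2, and ω̃_2 by replacing positions t_1, t_1+1, t_1+2 of ω_2 with 1,1,2. Then the multiset {ω̃_1, ω̃_2} has the same total number of i→j transitions as {ω_1, ω_2} for every (i,j), and the same initial and final states. -/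

import Mathlib

/-- Number of transitions from state `i` to state `j` in the path `ω = (s₁,…,s_T)`
(indexed `0,…,T-1`). -/
def transCount {S : Type} [DecidableEq S] {T : ℕ} (ω : Fin T → S) (i j : S) : ℕ :=
  (Finset.univ.filter (fun t : Fin (T - 1) =>
    ω ⟨t.1, by have := t.2; omega⟩ = i ∧ ω ⟨t.1 + 1, by have := t.2; omega⟩ = j)).card

/-- Total transition count `b_{ij}(x)` of a contingency table `x`. -/
def transTotal {S : Type} [DecidableEq S] [Fintype S] {T : ℕ}
    (x : (Fin T → S) → ℕ) (i j : S) : ℕ :=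
  ∑ ω : Fin T → S, x ω * transCount ω i j

set_option maxHeartbeats 800000

lemma key {T : ℕ} (p : ℕ) (hp1 : 1 ≤ p) (hp2 : p + 1 ≤ T - 1)
    (ω τ : Fin T → Fin 2)
    (hdiff : ∀ m : Fin T, (m : ℕ) ≠ p → τ m = ω m) (i j : Fin 2) :
    transCount τ i j +
      ((if ω ⟨p - 1, by omega⟩ = i ∧ ω ⟨p, by omega⟩ = j then 1 else 0) +
       (if ω ⟨p, by omega⟩ = i ∧ ω ⟨p + 1, by omega⟩ = j then 1 else 0)) =
    transCount ω i j +
      ((if τ ⟨p - 1, by omega⟩ = i ∧ τ ⟨p, by omega⟩ = j then 1 else 0) +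
       (if τ ⟨p, by omega⟩ = i ∧ τ ⟨p + 1, by omega⟩ = j then 1 else 0)) := by
  have hT : 2 ≤ T := by omega
  set F : (Fin T → Fin 2) → Fin (T - 1) → ℕ := fun σ t =>
    if σ ⟨t.1, by have := t.2; omega⟩ = i ∧ σ ⟨t.1 + 1, by have := t.2; omega⟩ = j then 1 else 0
    with hF
  have hc : ∀ σ : Fin T → Fin 2, transCount σ i j = ∑ t : Fin (T-1), F σ t := by
    intro σ
    rw [transCount, Finset.card_filter]
  set a : Fin (T - 1) := ⟨p - 1, by omega⟩ with ha
  set b : Fin (T - 1) := ⟨p, by omega⟩ with hb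
  have hab : a ≠ b := by
    simp [ha, hb, Fin.ext_iff]; omega
  have split : ∀ (g : Fin (T-1) → ℕ),
      ∑ t : Fin (T-1), g t = g a + g b + ∑ t ∈ (Finset.univ.erase a).erase b, g t := by
    intro g
    rw [← Finset.sum_erase_add _ _ (Finset.mem_univ a),
        ← Finset.sum_erase_add _ _ (Finset.mem_erase.mpr ⟨Ne.symm hab, Finset.mem_univ b⟩)]
    ring
  have hrest : ∀ t ∈ (Finset.univ.erase a).erase b, F τ t = F ω t := by
    intro t ht
    simp only [Finset.mem_erase] at ht
    have h1 : (t : ℕ) ≠ p - 1 := by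
      intro h; exact ht.2.1 (Fin.ext h)
    have h2 : (t : ℕ) ≠ p := by
      intro h; exact ht.1 (Fin.ext h)
    have e1 : τ ⟨t.1, by have := t.2; omega⟩ = ω ⟨t.1, by have := t.2; omega⟩ :=
      hdiff _ h2
    have e2 : τ ⟨t.1 + 1, by have := t.2; omega⟩ = ω ⟨t.1 + 1, by have := t.2; omega⟩ :=
      hdiff _ (by first | (simp; omega) | simp)
    simp [hF, e1, e2]
  have hFa : ∀ σ, F σ a =
      (if σ ⟨p - 1, by omega⟩ = i ∧ σ ⟨p, by omega⟩ = j then 1 else 0) := by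
    intro σ
    have e : (⟨(a : ℕ) + 1, by have := a.2; omega⟩ : Fin T) = ⟨p, by omega⟩ := by
      simp [ha]; omega
    simp only [hF, e]
    rfl
  have hFb : ∀ σ, F σ b =
      (if σ ⟨p, by omega⟩ = i ∧ σ ⟨p + 1, by omega⟩ = j then 1 else 0) := by
    intro σ; rfl
  rw [hc, hc, split (F τ), split (F ω), Finset.sum_congr rfl hrest]
  simp only [hFa, hFb]
  ring

/-- the degree-two swap (iv) preserves transition counts and the
initial and final states.  State `0` is the paper's `1`, state `1` is the
paper's `2`; `q₀ = t₀ - 1`, `q₁ = t₁ - 1` are 0-indexed positions. -/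
theorem stmt15 {T : ℕ} (hT : 4 ≤ T) (q0 q1 : ℕ)
    (h0 : q0 + 2 ≤ T - 1) (h1 : q1 + 2 ≤ T - 1)
    (ω₁ ω₂ : Fin T → Fin 2)
    (hω₁ : ω₁ ⟨q0, by omega⟩ = 0 ∧ ω₁ ⟨q0 + 1, by omega⟩ = 0 ∧
           ω₁ ⟨q0 + 2, by omega⟩ = 1)
    (hω₂ : ω₂ ⟨q1, by omega⟩ = 0 ∧ ω₂ ⟨q1 + 1, by omega⟩ = 1 ∧
           ω₂ ⟨q1 + 2, by omega⟩ = 1)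
    (τ₁ τ₂ : Fin T → Fin 2)
    (hτ₁ : ∀ m : Fin T, τ₁ m =
      if (m : ℕ) = q0 then 0 else if (m : ℕ) = q0 + 1 then 1
      else if (m : ℕ) = q0 + 2 then 1 else ω₁ m)
    (hτ₂ : ∀ m : Fin T, τ₂ m =
      if (m : ℕ) = q1 then 0 else if (m : ℕ) = q1 + 1 then 0
      else if (m : ℕ) = q1 + 2 then 1 else ω₂ m) :
    (∀ i j : Fin 2,
      transCount τ₁ i j + transCount τ₂ i j = transCount ω₁ i j + transCount ω₂ i j) ∧
    τ₁ ⟨0, by omega⟩ = ω₁ ⟨0, by omega⟩ ∧ τ₂ ⟨0, by omega⟩ = ω₂ ⟨0, by omega⟩ ∧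
    τ₁ ⟨T - 1, by omega⟩ = ω₁ ⟨T - 1, by omega⟩ ∧
    τ₂ ⟨T - 1, by omega⟩ = ω₂ ⟨T - 1, by omega⟩ := by
  obtain ⟨ha1, hb1, hc1⟩ := hω₁
  obtain ⟨ha2, hb2, hc2⟩ := hω₂
  have hd1 : ∀ m : Fin T, (m : ℕ) ≠ q0 + 1 → τ₁ m = ω₁ m := by
    intro m hm
    rw [hτ₁]
    by_cases g1 : (m : ℕ) = q0
    · rw [if_pos g1, show m = ⟨q0, by omega⟩ from Fin.ext g1, ha1]
    · rw [if_neg g1, if_neg hm]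
      by_cases g3 : (m : ℕ) = q0 + 2
      · rw [if_pos g3, show m = ⟨q0 + 2, by omega⟩ from Fin.ext g3, hc1]
      · rw [if_neg g3]
  have hd2 : ∀ m : Fin T, (m : ℕ) ≠ q1 + 1 → τ₂ m = ω₂ m := by
    intro m hm
    rw [hτ₂]
    by_cases g1 : (m : ℕ) = q1
    · rw [if_pos g1, show m = ⟨q1, by omega⟩ from Fin.ext g1, ha2]
    · rw [if_neg g1, if_neg hm]
      by_cases g3 : (m : ℕ) = q1 + 2
      · rw [if_pos g3, show m = ⟨q1 + 2, by omega⟩ from Fin.ext g3, hc2]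
      · rw [if_neg g3]
  have t1a : τ₁ ⟨q0, by omega⟩ = 0 := by
    rw [hτ₁]; exact if_pos rfl
  have t1b : τ₁ ⟨q0 + 1, by omega⟩ = 1 := by
    rw [hτ₁]
    rw [if_neg (by simp), if_pos rfl]
  have t2a : τ₂ ⟨q1, by omega⟩ = 0 := by
    rw [hτ₂]; exact if_pos rfl
  have t2b : τ₂ ⟨q1 + 1, by omega⟩ = 0 := by
    rw [hτ₂]
    rw [if_neg (by simp), if_pos rfl]
  have t1c : τ₁ ⟨q0 + 2, by omega⟩ = 1 := by
    rw [hd1 _ (by first | (simp; omega) | simp)]; exact hc1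
  have t2c : τ₂ ⟨q1 + 2, by omega⟩ = 1 := by
    rw [hd2 _ (by first | (simp; omega) | simp)]; exact hc2
  refine ⟨?_, hd1 _ (by first | (simp; omega) | simp), hd2 _ (by first | (simp; omega) | simp),
    hd1 _ (by first | (simp; omega) | simp), hd2 _ (by first | (simp; omega) | simp)⟩
  intro i j
  have k1 := key (q0 + 1) (by omega) (by omega) ω₁ τ₁ hd1 i j
  have k2 := key (q1 + 1) (by omega) (by omega) ω₂ τ₂ hd2 i j
  simp only [Nat.add_sub_cancel] at k1 k2
  simp only [ha1, hb1, hc1, t1a, t1b, t1c] at k1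
  simp only [ha2, hb2, hc2, t2a, t2b, t2c] at k2
  fin_cases i <;> fin_cases j <;> simp at k1 k2 ⊢ <;> omega
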